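/- Let G be a finite nonempty signed graph with maximal degree d_max and let μ₁ be the smallest eigenvalue of the twisted Laplacian Δ^τ. Then μ₁ ≥ d_max − √(d_max² − ψ(G)²). -/

import Mathlib

open scoped Classical
open Matrix

noncomputable section

namespace SignedPaper

variable {V : Type*}

/-- The twisted Laplacian `Δ^τ` of a signed graph: `(Δ^τ f)(x) = d(x) f(x) - ∑_{y ∈ N(x)} sgn(x,y) f(y)`. -/
def twistedLaplacian [Fintype V] [DecidableEq V] (G : SimpleGraph V) [DecidableRel G.Adj]
    (sgn : Sym2 V → ℝ) : Matrix V V ℝ :=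
  Matrix.of fun x y =>
    if x = y then (G.degree x : ℝ) else if G.Adj x y then - sgn s(x, y) else 0

/-- The sign function takes values ±1 on every edge. -/
def IsSigning (G : SimpleGraph V) (sgn : Sym2 V → ℝ) : Prop :=
  ∀ e ∈ G.edgeSet, sgn e = 1 ∨ sgn e = -1

/-- A signed graph is coherently signed if every cycle has sign +1. -/
def IsCoherent (G : SimpleGraph V) (sgn : Sym2 V → ℝ) : Prop :=
  ∀ (v : V) (c : G.Walk v v), c.IsCycle → (c.edges.map sgn).prod = 1

/-- The subgraph induced on a vertex subset `S`, viewed as a graph on `V`. -/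
def inducedOn (G : SimpleGraph V) (S : Set V) : SimpleGraph V where
  Adj x y := G.Adj x y ∧ x ∈ S ∧ y ∈ S
  symm := ⟨fun x y h => ⟨h.1.symm, h.2.2, h.2.1⟩⟩
  loopless := ⟨fun x h => G.loopless.irrefl x h.1⟩

/-- `e_mc(S)`: the minimal number of edges to delete from the induced subgraph on `S`
so that the result is coherently signed. -/
def emc (G : SimpleGraph V) (sgn : Sym2 V → ℝ) (S : Set V) : ℕ :=
  sInf {n : ℕ | ∃ F : Finset (Sym2 V), F.card = n ∧ ↑F ⊆ (inducedOn G S).edgeSet ∧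
    IsCoherent ((inducedOn G S).deleteEdges ↑F) sgn}

/-- `∂S`: the set of edges with exactly one endpoint in `S`. -/
def edgeBoundary [Fintype V] [DecidableEq V] (G : SimpleGraph V) (S : Set V) :
    Finset (Sym2 V) :=
  Finset.univ.filter fun e : Sym2 V => e ∈ G.edgeSet ∧ ∃ x y, e = s(x, y) ∧ x ∈ S ∧ y ∉ S

/-- `ψ(S) = (|∂S| + 2 e_mc(S)) / |S|`. -/
def psiSet [Fintype V] [DecidableEq V] (G : SimpleGraph V) (sgn : Sym2 V → ℝ)
    (S : Finset V) : ℝ :=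
  ((edgeBoundary G ↑S).card + 2 * emc G sgn ↑S) / S.card

/-- `ψ(G) = min_{∅ ≠ S ⊆ V} ψ(S)`. -/
def psi [Fintype V] [DecidableEq V] (G : SimpleGraph V) (sgn : Sym2 V → ℝ) : ℝ :=
  sInf {x : ℝ | ∃ S : Finset V, S.Nonempty ∧ x = psiSet G sgn S}

/-- `ψ̃(G) = min_{∅ ≠ S ⊆ V} (|∂S| + 4 e_mc(S)) / |S|`. -/
def psiTilde [Fintype V] [DecidableEq V] (G : SimpleGraph V) (sgn : Sym2 V → ℝ) : ℝ :=
  sInf {x : ℝ | ∃ S : Finset V, S.Nonempty ∧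
    x = ((edgeBoundary G ↑S).card + 4 * emc G sgn ↑S) / S.card}

/-- `h(S) = min_{∅ ≠ T ⊆ S} |∂T| / |T|`. -/
def hConst [Fintype V] [DecidableEq V] (G : SimpleGraph V) (S : Finset V) : ℝ :=
  sInf {x : ℝ | ∃ T : Finset V, T ⊆ S ∧ T.Nonempty ∧ x = (edgeBoundary G ↑T).card / T.card}

/-- The signed adjacency matrix `A^τ`. -/
def signedAdjMatrix [Fintype V] (G : SimpleGraph V) [DecidableRel G.Adj]
    (sgn : Sym2 V → ℝ) : Matrix V V ℝ :=
  Matrix.of fun x y => if G.Adj x y then sgn s(x, y) else 0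

/-! ### Auxiliary lemmas -/

section Aux

open Finset MeasureTheory

lemma walk_sgn_prod (H : SimpleGraph V) (sgn : Sym2 V → ℝ) (σ : V → ℝ)
    (hσ : ∀ x, σ x * σ x = 1)
    (hH : ∀ ⦃x y : V⦄, H.Adj x y → sgn s(x, y) = σ x * σ y) :
    ∀ {u v : V} (p : H.Walk u v), (p.edges.map sgn).prod = σ u * σ v := by
  intro u v p
  induction p with
  | nil => simpa using (hσ _).symm
  | @cons a b c h p ih =>
      simp only [SimpleGraph.Walk.edges_cons, List.map_cons, List.prod_cons, ih, hH h]
      linear_combination σ a * σ c * hσ b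

lemma isCoherent_of_switching (H : SimpleGraph V) (sgn : Sym2 V → ℝ) (σ : V → ℝ)
    (hσ : ∀ x, σ x * σ x = 1)
    (hH : ∀ ⦃x y : V⦄, H.Adj x y → sgn s(x, y) = σ x * σ y) :
    IsCoherent H sgn := by
  intro v c _
  rw [walk_sgn_prod H sgn σ hσ hH c]
  exact hσ v

lemma card_boundary [Fintype V] [DecidableEq V] (G : SimpleGraph V) (S : Set V) :
    (edgeBoundary G S).card =
      (Finset.univ.filter fun p : V × V => G.Adj p.1 p.2 ∧ p.1 ∈ S ∧ p.2 ∉ S).card := by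
  refine (Finset.card_bij (fun p _ => s(p.1, p.2)) ?_ ?_ ?_).symm
  · rintro ⟨x, y⟩ hp
    simp only [Finset.mem_filter, Finset.mem_univ, true_and] at hp
    simp only [edgeBoundary, Finset.mem_filter, Finset.mem_univ, true_and]
    exact ⟨hp.1, x, y, rfl, hp.2.1, hp.2.2⟩
  · rintro ⟨x, y⟩ hp ⟨x', y'⟩ hp' h
    simp only [Finset.mem_filter, Finset.mem_univ, true_and] at hp hp'
    rw [Sym2.eq_iff] at h
    rcases h with ⟨rfl, rfl⟩ | ⟨rfl, rfl⟩
    · rfl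
    · exact absurd hp'.2.1 hp.2.2
  · intro e he
    simp only [edgeBoundary, Finset.mem_filter, Finset.mem_univ, true_and] at he
    obtain ⟨hadj, x, y, rfl, hx, hy⟩ := he
    rw [SimpleGraph.mem_edgeSet] at hadj
    exact ⟨(x, y), by simp [hadj, hx, hy], rfl⟩

lemma two_mul_card_badedges [Fintype V] [DecidableEq V] (H : SimpleGraph V)
    (bad : Sym2 V → Prop) :
    (Finset.univ.filter fun p : V × V => H.Adj p.1 p.2 ∧ bad s(p.1, p.2)).card =
      2 * (Finset.univ.filter fun e : Sym2 V => e ∈ H.edgeSet ∧ bad e).card := by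
  rw [Finset.card_eq_sum_card_fiberwise
    (f := fun p : V × V => s(p.1, p.2))
    (t := Finset.univ.filter fun e : Sym2 V => e ∈ H.edgeSet ∧ bad e) ?_]
  · rw [Finset.sum_congr rfl (g := fun _ => 2) ?_, Finset.sum_const, smul_eq_mul, mul_comm]
    intro e he
    simp only [Finset.mem_filter, Finset.mem_univ, true_and] at he
    induction e with
    | _ x y =>
      have hadj : H.Adj x y := he.1
      have hxy : x ≠ y := hadj.ne
      have : (Finset.univ.filter fun p : V × V => H.Adj p.1 p.2 ∧ bad s(p.1, p.2)).filter
          (fun p => s(p.1, p.2) = s(x, y)) = {(x, y), (y, x)} := by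
        ext ⟨a, b⟩
        simp only [Finset.mem_filter, Finset.mem_univ, true_and, Finset.mem_insert,
          Finset.mem_singleton, Prod.mk.injEq]
        constructor
        · rintro ⟨_, heq⟩
          rw [Sym2.eq_iff] at heq
          tauto
        · rintro (⟨rfl, rfl⟩ | ⟨rfl, rfl⟩)
          · exact ⟨⟨hadj, he.2⟩, rfl⟩
          · exact ⟨⟨hadj.symm, by rw [Sym2.eq_swap]; exact he.2⟩, Sym2.eq_swap⟩
      rw [this]
      rw [Finset.card_insert_of_notMem (by simp [Prod.ext_iff]; tauto), Finset.card_singleton]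
  · rintro ⟨x, y⟩ hp
    simp only [Finset.mem_filter, Finset.mem_univ, true_and] at hp ⊢
    exact Finset.mem_filter.mpr ⟨Finset.mem_univ _, (Finset.mem_filter.mp hp).2.1, (Finset.mem_filter.mp hp).2.2⟩

lemma psiSet_nonneg [Fintype V] [DecidableEq V] (G : SimpleGraph V) (sgn : Sym2 V → ℝ)
    (S : Finset V) : 0 ≤ psiSet G sgn S := by
  apply div_nonneg <;> positivity

lemma psi_nonneg [Fintype V] [DecidableEq V] [Nonempty V] (G : SimpleGraph V)
    (sgn : Sym2 V → ℝ) : 0 ≤ psi G sgn := by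
  refine le_csInf ⟨psiSet G sgn Finset.univ, ?_⟩ ?_
  · exact ⟨Finset.univ, Finset.univ_nonempty, rfl⟩
  · rintro x ⟨S, -, rfl⟩
    exact psiSet_nonneg G sgn S

lemma psi_le_psiSet [Fintype V] [DecidableEq V] (G : SimpleGraph V) (sgn : Sym2 V → ℝ)
    (S : Finset V) (hS : S.Nonempty) : psi G sgn ≤ psiSet G sgn S := by
  apply csInf_le
  · exact ⟨0, by rintro x ⟨T, -, rfl⟩; exact psiSet_nonneg G sgn T⟩
  · exact ⟨S, hS, rfl⟩

lemma emc_le [Fintype V] [DecidableEq V] (G : SimpleGraph V) (sgn : Sym2 V → ℝ) (S : Set V)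
    (F : Finset (Sym2 V)) (h1 : ↑F ⊆ (inducedOn G S).edgeSet)
    (h2 : IsCoherent ((inducedOn G S).deleteEdges ↑F) sgn) :
    emc G sgn S ≤ F.card :=
  Nat.sInf_le ⟨F, rfl, h1, h2⟩

lemma exists_eigenvector [Fintype V] [DecidableEq V] (M : Matrix V V ℝ) (μ : ℝ)
    (h : μ ∈ spectrum ℝ M) : ∃ f : V → ℝ, f ≠ 0 ∧ M.mulVec f = μ • f := by
  rw [spectrum.mem_iff] at h
  have hdet : (algebraMap ℝ (Matrix V V ℝ) μ - M).det = 0 := by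
    by_contra hd
    exact h ((Matrix.isUnit_iff_isUnit_det _).mpr (isUnit_iff_ne_zero.mpr hd))
  obtain ⟨v, hv0, hv⟩ := (Matrix.exists_mulVec_eq_zero_iff).mpr hdet
  refine ⟨v, hv0, ?_⟩
  have h1 : (algebraMap ℝ (Matrix V V ℝ) μ).mulVec v - M.mulVec v = 0 := by
    rw [← Matrix.sub_mulVec]; exact hv
  have h2 : (algebraMap ℝ (Matrix V V ℝ) μ).mulVec v = μ • v := by
    rw [Algebra.algebraMap_eq_smul_one, Matrix.smul_mulVec, Matrix.one_mulVec]
  rw [h2, sub_eq_zero] at h1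
  exact h1.symm

/-! ### Integral computations -/

lemma integrableOn_ite_interval (c : Prop) [Decidable c] (a b : ℝ) :
    IntegrableOn (fun t : ℝ => if a ≤ t ∧ t < b ∧ c then (1:ℝ) else 0) (Set.Ioi 0) := by
  by_cases hc : c
  · have : (fun t : ℝ => if a ≤ t ∧ t < b ∧ c then (1:ℝ) else 0)
        = Set.indicator (Set.Ico a b) (fun _ => (1:ℝ)) := by
      ext t
      simp only [Set.indicator_apply, Set.mem_Ico]
      by_cases h1 : a ≤ t ∧ t < b <;> simp [h1, hc] <;> tauto
    rw [this]
    refine Integrable.integrableOn ?_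
    rw [integrable_indicator_iff measurableSet_Ico]
    refine (integrableOn_const_iff (C := (1:ℝ))).mpr (Or.inr ?_)
    rw [Real.volume_Ico]
    exact ENNReal.ofReal_lt_top
  · simp only [hc, and_false, if_false]
    exact (integrableOn_const_iff (C := (0:ℝ))).mpr (Or.inl enorm_zero)

lemma integral_ite_interval (c : Prop) [Decidable c] (a b : ℝ) (ha : 0 ≤ a) :
    ∫ t in Set.Ioi (0:ℝ), (if a ≤ t ∧ t < b ∧ c then (1:ℝ) else 0)
      = if c then max (b - a) 0 else 0 := by
  by_cases hc : c
  · have heq : (fun t : ℝ => if a ≤ t ∧ t < b ∧ c then (1:ℝ) else 0)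
        = Set.indicator (Set.Ico a b) (fun _ => (1:ℝ)) := by
      ext t
      simp only [Set.indicator_apply, Set.mem_Ico]
      by_cases h1 : a ≤ t ∧ t < b <;> simp [h1, hc] <;> tauto
    rw [heq, MeasureTheory.setIntegral_indicator measurableSet_Ico,
      MeasureTheory.setIntegral_const, smul_eq_mul, mul_one, if_pos hc]
    rcases eq_or_lt_of_le ha with h0 | h0
    · rw [← h0]
      have hset : Set.Ioi (0:ℝ) ∩ Set.Ico 0 b = Set.Ioo 0 b := by
        ext t
        simp only [Set.mem_inter_iff, Set.mem_Ioi, Set.mem_Ico, Set.mem_Ioo]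
        constructor
        · rintro ⟨h1, -, h3⟩; exact ⟨h1, h3⟩
        · rintro ⟨h1, h3⟩; exact ⟨h1, le_of_lt h1, h3⟩
      rw [hset, Real.volume_real_Ioo]
    · have hsub : Set.Ico a b ⊆ Set.Ioi (0:ℝ) := fun t ht => lt_of_lt_of_le h0 ht.1
      rw [Set.inter_eq_right.mpr hsub, Real.volume_real_Ico]
  · simp [hc]


/-! ### Sums over ordered adjacent pairs -/

def pairs [Fintype V] (G : SimpleGraph V) [DecidableRel G.Adj] : Finset (V × V) :=
  Finset.univ.filter fun p => G.Adj p.1 p.2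

lemma mem_pairs [Fintype V] (G : SimpleGraph V) [DecidableRel G.Adj] (p : V × V) :
    p ∈ pairs G ↔ G.Adj p.1 p.2 := by simp [pairs]

lemma sum_pairs_swap [Fintype V] (G : SimpleGraph V) [DecidableRel G.Adj] (g : V × V → ℝ) :
    ∑ p ∈ pairs G, g p = ∑ p ∈ pairs G, g (p.2, p.1) := by
  refine Finset.sum_nbij' (fun p => (p.2, p.1)) (fun p => (p.2, p.1)) ?_ ?_ ?_ ?_ ?_
  · intro p hp; rw [mem_pairs] at hp ⊢; exact hp.symm
  · intro p hp; rw [mem_pairs] at hp ⊢; exact hp.symm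
  · intro p _; rfl
  · intro p _; rfl
  · intro p _; rfl

lemma sum_pairs_fst [Fintype V] [DecidableEq V] (G : SimpleGraph V) [DecidableRel G.Adj]
    (g : V → ℝ) : ∑ p ∈ pairs G, g p.1 = ∑ x, (G.degree x : ℝ) * g x := by
  rw [pairs, Finset.sum_filter, Fintype.sum_prod_type]
  refine Finset.sum_congr rfl fun x _ => ?_
  calc ∑ y, (if G.Adj x y then g x else 0)
      = ∑ y ∈ Finset.univ.filter (fun y => G.Adj x y), g x := (Finset.sum_filter _ _).symm
    _ = (Finset.univ.filter (fun y => G.Adj x y)).card • g x := Finset.sum_const _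
    _ = (G.degree x : ℝ) * g x := by
        rw [← SimpleGraph.neighborFinset_eq_filter, nsmul_eq_mul]
        rfl

lemma sum_pairs_snd [Fintype V] [DecidableEq V] (G : SimpleGraph V) [DecidableRel G.Adj]
    (g : V → ℝ) : ∑ p ∈ pairs G, g p.2 = ∑ x, (G.degree x : ℝ) * g x := by
  rw [sum_pairs_swap]
  exact sum_pairs_fst G g

lemma quad_identity [Fintype V] [DecidableEq V] (G : SimpleGraph V) [DecidableRel G.Adj]
    (sgn : Sym2 V → ℝ) (hsgn : IsSigning G sgn) (f : V → ℝ) (μ : ℝ)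
    (hf : (twistedLaplacian G sgn).mulVec f = μ • f) :
    ∑ p ∈ pairs G, (f p.1 - sgn s(p.1, p.2) * f p.2) ^ 2 = 2 * μ * ∑ x, f x ^ 2 := by
  have hmul : ∀ x, ∑ y, (twistedLaplacian G sgn) x y * f y = μ * f x := by
    intro x
    have := congrFun hf x
    simpa [Matrix.mulVec, dotProduct] using this
  have key : ∀ x, (G.degree x : ℝ) * f x
      - (∑ y, (if G.Adj x y then sgn s(x, y) * f y else 0)) = μ * f x := by
    intro x
    rw [← hmul x]
    have : ∀ y, (twistedLaplacian G sgn) x y * f y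
        = (if x = y then (G.degree x : ℝ) * f y else 0)
          - (if G.Adj x y then sgn s(x, y) * f y else 0) := by
      intro y
      by_cases h : x = y
      · subst h
        simp [twistedLaplacian, G.irrefl]
      · by_cases ha : G.Adj x y <;> simp [twistedLaplacian, h, ha] <;> ring
    rw [Finset.sum_congr rfl fun y _ => this y, Finset.sum_sub_distrib,
      Finset.sum_ite_eq Finset.univ x (fun y => (G.degree x : ℝ) * f y)]
    simp
  have hW : ∑ x, f x * (∑ y, (if G.Adj x y then sgn s(x, y) * f y else 0))
      = ∑ p ∈ pairs G, sgn s(p.1, p.2) * (f p.1 * f p.2) := by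
    rw [pairs, Finset.sum_filter, Fintype.sum_prod_type]
    refine Finset.sum_congr rfl fun x _ => ?_
    rw [Finset.mul_sum]
    refine Finset.sum_congr rfl fun y _ => ?_
    by_cases ha : G.Adj x y <;> simp [ha] <;> ring
  have hD : ∑ x, f x * ((G.degree x : ℝ) * f x) = ∑ x, (G.degree x : ℝ) * f x ^ 2 := by
    refine Finset.sum_congr rfl fun x _ => by ring
  have key2 : (∑ x, (G.degree x : ℝ) * f x ^ 2)
      - (∑ p ∈ pairs G, sgn s(p.1, p.2) * (f p.1 * f p.2)) = μ * ∑ x, f x ^ 2 := by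
    rw [← hW, ← hD, ← Finset.sum_sub_distrib, Finset.mul_sum]
    refine Finset.sum_congr rfl fun x _ => ?_
    rw [← mul_sub, key x]
    ring
  have hQ : ∑ p ∈ pairs G, (f p.1 - sgn s(p.1, p.2) * f p.2) ^ 2
      = ∑ p ∈ pairs G, (f p.1 ^ 2 + f p.2 ^ 2 - 2 * (sgn s(p.1, p.2) * (f p.1 * f p.2))) := by
    refine Finset.sum_congr rfl fun p hp => ?_
    rw [mem_pairs] at hp
    rcases hsgn s(p.1, p.2) ((G.mem_edgeSet).mpr hp) with h | h <;> rw [h] <;> ring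
  rw [hQ]
  have expand : ∑ p ∈ pairs G, (f p.1 ^ 2 + f p.2 ^ 2 - 2 * (sgn s(p.1, p.2) * (f p.1 * f p.2)))
      = (∑ p ∈ pairs G, f p.1 ^ 2) + (∑ p ∈ pairs G, f p.2 ^ 2)
        - 2 * ∑ p ∈ pairs G, sgn s(p.1, p.2) * (f p.1 * f p.2) := by
    rw [Finset.sum_sub_distrib, Finset.sum_add_distrib, Finset.mul_sum]
  rw [expand, sum_pairs_fst G (fun x => f x ^ 2), sum_pairs_snd G (fun x => f x ^ 2)]
  linarith [key2]


/-! ### The sweep inequality -/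

/-- product of the endpoint values of `f` over an edge -/
def sym2Mul (f : V → ℝ) : Sym2 V → ℝ :=
  Sym2.lift ⟨fun x y => f x * f y, fun x y => mul_comm (f x) (f y)⟩

@[simp] lemma sym2Mul_mk (f : V → ℝ) (x y : V) : sym2Mul f s(x, y) = f x * f y := rfl

lemma inducedOn_adj (G : SimpleGraph V) (S : Set V) (x y : V) :
    (inducedOn G S).Adj x y ↔ G.Adj x y ∧ x ∈ S ∧ y ∈ S := Iff.rfl

lemma sweep_ineq [Fintype V] [DecidableEq V] [Nonempty V] (G : SimpleGraph V)
    [DecidableRel G.Adj] (sgn : Sym2 V → ℝ) (hsgn : IsSigning G sgn) (f : V → ℝ)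
    (t : ℝ) (ht : 0 < t) :
    psi G sgn * ∑ x, (if 0 ≤ t ∧ t < f x ^ 2 ∧ True then (1:ℝ) else 0)
      ≤ ∑ p ∈ pairs G,
        ((if f p.2 ^ 2 ≤ t ∧ t < f p.1 ^ 2 ∧ True then (1:ℝ) else 0)
          + (if 0 ≤ t ∧ t < min (f p.1 ^ 2) (f p.2 ^ 2)
                ∧ sgn s(p.1, p.2) * (f p.1 * f p.2) < 0 then (1:ℝ) else 0)) := by
  classical
  set St : Finset V := Finset.univ.filter (fun x => t < f x ^ 2) with hSt_def
  have hcard : ∑ x, (if 0 ≤ t ∧ t < f x ^ 2 ∧ True then (1:ℝ) else 0) = (St.card : ℝ) := by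
    rw [hSt_def]
    rw [Finset.card_filter]
    push_cast
    refine Finset.sum_congr rfl fun x _ => ?_
    by_cases h : t < f x ^ 2 <;> simp [h, le_of_lt ht]
  rw [hcard]
  rcases Finset.eq_empty_or_nonempty St with hemp | hne
  · rw [hemp]
    simp only [Finset.card_empty, Nat.cast_zero, mul_zero]
    refine Finset.sum_nonneg fun p _ => ?_
    positivity
  -- the nonempty case
  have hcardpos : (0:ℝ) < St.card := by
    have := Finset.card_pos.mpr hne
    exact_mod_cast this
  have h1 : psi G sgn ≤ psiSet G sgn St := psi_le_psiSet G sgn St hne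
  have h2 : psi G sgn * St.card ≤
      ((edgeBoundary G ↑St).card : ℝ) + 2 * (emc G sgn ↑St : ℝ) := by
    have := mul_le_mul_of_nonneg_right h1 (le_of_lt hcardpos)
    refine le_trans this ?_
    rw [psiSet, div_mul_cancel₀]
    exact ne_of_gt hcardpos
  -- bound on the boundary term
  have hbnd : ((edgeBoundary G ↑St).card : ℝ)
      = ∑ p ∈ pairs G, (if f p.2 ^ 2 ≤ t ∧ t < f p.1 ^ 2 ∧ True then (1:ℝ) else 0) := by
    rw [card_boundary G ↑St, Finset.card_filter, pairs, Finset.sum_filter]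
    push_cast
    refine Finset.sum_congr rfl fun p _ => ?_
    have hmi : (G.Adj p.1 p.2 ∧ p.1 ∈ (↑St : Set V) ∧ p.2 ∉ (↑St : Set V)) ↔
        (G.Adj p.1 p.2 ∧ (f p.2 ^ 2 ≤ t ∧ t < f p.1 ^ 2 ∧ True)) := by
      simp only [Finset.mem_coe, hSt_def, Finset.mem_filter, Finset.mem_univ, true_and,
        not_lt, and_true]
      tauto
    rw [if_congr hmi rfl rfl]
    by_cases ha : G.Adj p.1 p.2 <;> simp [ha]
  -- bound on the emc term
  set F : Finset (Sym2 V) := Finset.univ.filter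
      (fun e : Sym2 V => e ∈ (inducedOn G ↑St).edgeSet ∧ sgn e * sym2Mul f e < 0) with hF_def
  have hFsub : ↑F ⊆ (inducedOn G (↑St : Set V)).edgeSet := by
    intro e he
    rw [Finset.mem_coe, hF_def, Finset.mem_filter] at he
    exact he.2.1
  have hfne : ∀ x ∈ St, f x ≠ 0 := by
    intro x hx h0
    rw [hSt_def, Finset.mem_filter] at hx
    rw [h0] at hx
    have : t < 0 := by simpa using hx.2
    linarith
  have hcoh : IsCoherent ((inducedOn G ↑St).deleteEdges ↑F) sgn := by
    apply isCoherent_of_switching _ sgn (fun x => if 0 ≤ f x then (1:ℝ) else -1)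
    · intro x; by_cases h : 0 ≤ f x <;> simp [h]
    · intro x y h
      rw [SimpleGraph.deleteEdges_adj] at h
      obtain ⟨h1, hnF⟩ := h
      rw [inducedOn_adj] at h1
      obtain ⟨hadj, hx, hy⟩ := h1
      have hfx : f x ≠ 0 := hfne x (Finset.mem_coe.mp hx)
      have hfy : f y ≠ 0 := hfne y (Finset.mem_coe.mp hy)
      have hnbad : ¬ (sgn s(x, y) * (f x * f y) < 0) := by
        intro hb
        apply hnF
        rw [Finset.mem_coe, hF_def, Finset.mem_filter]
        refine ⟨Finset.mem_univ _, (SimpleGraph.mem_edgeSet _).mpr ⟨hadj, hx, hy⟩, ?_⟩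
        simpa using hb
      push_neg at hnbad
      have hsne : sgn s(x, y) ≠ 0 := by
        rcases hsgn s(x, y) (G.mem_edgeSet.mpr hadj) with hs | hs <;> rw [hs] <;> norm_num
      have hprod : 0 < sgn s(x, y) * (f x * f y) :=
        lt_of_le_of_ne hnbad (Ne.symm (mul_ne_zero hsne (mul_ne_zero hfx hfy)))
      have hfx' : f x ≠ 0 := hfx
      rcases hsgn s(x, y) (G.mem_edgeSet.mpr hadj) with hs | hs
      · rw [hs] at hprod ⊢
        have hpp : 0 < f x * f y := by nlinarith
        by_cases hx1 : 0 ≤ f x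
        · have hx2 : 0 < f x := lt_of_le_of_ne hx1 (Ne.symm hfx)
          by_cases hy1 : 0 ≤ f y
          · simp [hx1, hy1]
          · exfalso; push_neg at hy1; nlinarith
        · push_neg at hx1
          by_cases hy1 : 0 ≤ f y
          · exfalso
            have hy2 : 0 < f y := lt_of_le_of_ne hy1 (Ne.symm hfy)
            nlinarith
          · simp [not_le.mpr hx1, hy1]
      · rw [hs] at hprod ⊢
        have hpp : f x * f y < 0 := by nlinarith
        by_cases hx1 : 0 ≤ f x
        · have hx2 : 0 < f x := lt_of_le_of_ne hx1 (Ne.symm hfx)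
          by_cases hy1 : 0 ≤ f y
          · exfalso
            have hy2 : 0 < f y := lt_of_le_of_ne hy1 (Ne.symm hfy)
            nlinarith
          · simp [hx1, hy1]
        · push_neg at hx1
          by_cases hy1 : 0 ≤ f y
          · simp [not_le.mpr hx1, hy1]
          · exfalso; push_neg at hy1; nlinarith
  have hemc : (emc G sgn ↑St : ℝ) ≤ (F.card : ℝ) := by
    exact_mod_cast emc_le G sgn ↑St F hFsub hcoh
  have hFcard : 2 * (F.card : ℝ)
      = ∑ p ∈ pairs G, (if 0 ≤ t ∧ t < min (f p.1 ^ 2) (f p.2 ^ 2)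
          ∧ sgn s(p.1, p.2) * (f p.1 * f p.2) < 0 then (1:ℝ) else 0) := by
    have h2m := two_mul_card_badedges (inducedOn G (↑St : Set V))
      (fun e => sgn e * sym2Mul f e < 0)
    have : (2:ℝ) * F.card = ((Finset.univ.filter fun p : V × V =>
        (inducedOn G (↑St : Set V)).Adj p.1 p.2
          ∧ sgn s(p.1, p.2) * sym2Mul f s(p.1, p.2) < 0).card : ℝ) := by
      rw [h2m]; push_cast; ring
    rw [this, Finset.card_filter, pairs, Finset.sum_filter]
    push_cast
    refine Finset.sum_congr rfl fun p _ => ?_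
    have hmi : ((inducedOn G (↑St : Set V)).Adj p.1 p.2
          ∧ sgn s(p.1, p.2) * sym2Mul f s(p.1, p.2) < 0) ↔
        (G.Adj p.1 p.2 ∧ (0 ≤ t ∧ t < min (f p.1 ^ 2) (f p.2 ^ 2)
          ∧ sgn s(p.1, p.2) * (f p.1 * f p.2) < 0)) := by
      rw [inducedOn_adj]
      simp only [Finset.mem_coe, hSt_def, Finset.mem_filter, Finset.mem_univ, true_and,
        sym2Mul_mk, lt_min_iff]
      constructor
      · rintro ⟨⟨ha, hx, hy⟩, hb⟩
        exact ⟨ha, le_of_lt ht, ⟨hx, hy⟩, hb⟩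
      · rintro ⟨ha, -, ⟨hx, hy⟩, hb⟩
        exact ⟨⟨ha, hx, hy⟩, hb⟩
    rw [if_congr hmi rfl rfl]
    by_cases ha : G.Adj p.1 p.2 <;> simp [ha]
  calc psi G sgn * St.card
      ≤ ((edgeBoundary G ↑St).card : ℝ) + 2 * (emc G sgn ↑St : ℝ) := h2
    _ ≤ ((edgeBoundary G ↑St).card : ℝ) + 2 * (F.card : ℝ) := by linarith
    _ = ∑ p ∈ pairs G,
        ((if f p.2 ^ 2 ≤ t ∧ t < f p.1 ^ 2 ∧ True then (1:ℝ) else 0)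
          + (if 0 ≤ t ∧ t < min (f p.1 ^ 2) (f p.2 ^ 2)
                ∧ sgn s(p.1, p.2) * (f p.1 * f p.2) < 0 then (1:ℝ) else 0)) := by
        rw [Finset.sum_add_distrib, ← hbnd, ← hFcard]


lemma sweep_integrated [Fintype V] [DecidableEq V] [Nonempty V] (G : SimpleGraph V)
    [DecidableRel G.Adj] (sgn : Sym2 V → ℝ) (hsgn : IsSigning G sgn) (f : V → ℝ) :
    psi G sgn * ∑ x, f x ^ 2
      ≤ ∑ p ∈ pairs G, (max (f p.1 ^ 2 - f p.2 ^ 2) 0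
          + (if sgn s(p.1, p.2) * (f p.1 * f p.2) < 0
              then min (f p.1 ^ 2) (f p.2 ^ 2) else 0)) := by
  classical
  have hIL1 : IntegrableOn
      (fun t => ∑ x, (if 0 ≤ t ∧ t < f x ^ 2 ∧ True then (1:ℝ) else 0)) (Set.Ioi 0) :=
    integrable_finset_sum _ (fun x _ => integrableOn_ite_interval True 0 (f x ^ 2))
  have hIL : IntegrableOn
      (fun t => psi G sgn * ∑ x, (if 0 ≤ t ∧ t < f x ^ 2 ∧ True then (1:ℝ) else 0))
      (Set.Ioi 0) := hIL1.const_mul _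
  have hIRp : ∀ p : V × V, IntegrableOn (fun t =>
      (if f p.2 ^ 2 ≤ t ∧ t < f p.1 ^ 2 ∧ True then (1:ℝ) else 0)
        + (if 0 ≤ t ∧ t < min (f p.1 ^ 2) (f p.2 ^ 2)
            ∧ sgn s(p.1, p.2) * (f p.1 * f p.2) < 0 then (1:ℝ) else 0)) (Set.Ioi 0) :=
    fun p => (integrableOn_ite_interval True (f p.2 ^ 2) (f p.1 ^ 2)).add
      (integrableOn_ite_interval _ 0 (min (f p.1 ^ 2) (f p.2 ^ 2)))
  have hIR : IntegrableOn (fun t => ∑ p ∈ pairs G,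
      ((if f p.2 ^ 2 ≤ t ∧ t < f p.1 ^ 2 ∧ True then (1:ℝ) else 0)
        + (if 0 ≤ t ∧ t < min (f p.1 ^ 2) (f p.2 ^ 2)
            ∧ sgn s(p.1, p.2) * (f p.1 * f p.2) < 0 then (1:ℝ) else 0))) (Set.Ioi 0) :=
    integrable_finset_sum _ (fun p _ => hIRp p)
  have hmono := MeasureTheory.setIntegral_mono_on hIL hIR measurableSet_Ioi
    (fun t ht => sweep_ineq G sgn hsgn f t ht)
  have hL : ∫ t in Set.Ioi (0:ℝ),
      (psi G sgn * ∑ x, (if 0 ≤ t ∧ t < f x ^ 2 ∧ True then (1:ℝ) else 0))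
        = psi G sgn * ∑ x, f x ^ 2 := by
    rw [MeasureTheory.integral_const_mul]
    congr 1
    rw [MeasureTheory.integral_finset_sum _
      (fun x _ => integrableOn_ite_interval True 0 (f x ^ 2))]
    refine Finset.sum_congr rfl fun x _ => ?_
    rw [integral_ite_interval True 0 (f x ^ 2) le_rfl, if_pos trivial, sub_zero,
      max_eq_left (sq_nonneg (f x))]
  have hR : ∫ t in Set.Ioi (0:ℝ), (∑ p ∈ pairs G,
      ((if f p.2 ^ 2 ≤ t ∧ t < f p.1 ^ 2 ∧ True then (1:ℝ) else 0)
        + (if 0 ≤ t ∧ t < min (f p.1 ^ 2) (f p.2 ^ 2)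
            ∧ sgn s(p.1, p.2) * (f p.1 * f p.2) < 0 then (1:ℝ) else 0)))
      = ∑ p ∈ pairs G, (max (f p.1 ^ 2 - f p.2 ^ 2) 0
          + (if sgn s(p.1, p.2) * (f p.1 * f p.2) < 0
              then min (f p.1 ^ 2) (f p.2 ^ 2) else 0)) := by
    rw [MeasureTheory.integral_finset_sum _ (fun p _ => hIRp p)]
    refine Finset.sum_congr rfl fun p _ => ?_
    rw [MeasureTheory.integral_add (integrableOn_ite_interval True (f p.2 ^ 2) (f p.1 ^ 2))
      (integrableOn_ite_interval _ 0 (min (f p.1 ^ 2) (f p.2 ^ 2)))]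
    congr 1
    · rw [integral_ite_interval True (f p.2 ^ 2) (f p.1 ^ 2) (sq_nonneg _), if_pos trivial]
    · rw [integral_ite_interval _ 0 (min (f p.1 ^ 2) (f p.2 ^ 2)) le_rfl]
      by_cases hb : sgn s(p.1, p.2) * (f p.1 * f p.2) < 0
      · rw [if_pos hb, if_pos hb, sub_zero,
          max_eq_left (le_min (sq_nonneg (f p.1)) (sq_nonneg (f p.2)))]
      · rw [if_neg hb, if_neg hb]
  rw [hL, hR] at hmono
  exact hmono

end Aux

set_option maxHeartbeats 2000000

/-- The smallest eigenvalue `μ₁` of the twisted Laplacian satisfies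
`μ₁ ≥ d_max - √(d_max² - ψ(G)²)`. -/
theorem mu1_ge_cheeger_lower [Fintype V] [DecidableEq V] [Nonempty V]
    (G : SimpleGraph V) [DecidableRel G.Adj] (sgn : Sym2 V → ℝ) (hsgn : IsSigning G sgn)
    (mu1 : ℝ)
    (hmem : mu1 ∈ spectrum ℝ (twistedLaplacian G sgn))
    (hmin : ∀ mu ∈ spectrum ℝ (twistedLaplacian G sgn), mu1 ≤ mu) :
    (G.maxDegree : ℝ) - Real.sqrt ((G.maxDegree : ℝ) ^ 2 - psi G sgn ^ 2) ≤ mu1 := by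
  classical
  obtain ⟨f, hf0, hfL⟩ := exists_eigenvector (twistedLaplacian G sgn) mu1 hmem
  set Nf : ℝ := ∑ x, f x ^ 2 with hNf_def
  have hNfpos : 0 < Nf := by
    obtain ⟨x, hx⟩ := Function.ne_iff.mp hf0
    have h1 : 0 < f x ^ 2 := lt_of_le_of_ne (sq_nonneg _) (Ne.symm (pow_ne_zero 2 hx))
    exact lt_of_lt_of_le h1 (Finset.single_le_sum (fun y _ => sq_nonneg (f y))
      (Finset.mem_univ x))
  have hQ : ∑ p ∈ pairs G, (f p.1 - sgn s(p.1, p.2) * f p.2) ^ 2 = 2 * mu1 * Nf :=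
    quad_identity G sgn hsgn f mu1 hfL
  have hmu0 : 0 ≤ mu1 := by
    have h1 : 0 ≤ 2 * mu1 * Nf := by
      rw [← hQ]
      exact Finset.sum_nonneg fun p _ => sq_nonneg _
    nlinarith
  set d : ℝ := (G.maxDegree : ℝ) with hd_def
  have hψ0 : 0 ≤ psi G sgn := psi_nonneg G sgn
  by_cases hmud : d ≤ mu1
  · have := Real.sqrt_nonneg (d ^ 2 - psi G sgn ^ 2)
    linarith
  push_neg at hmud
  -- auxiliary order to break ties
  set ord : V → ℕ := fun x => ((Fintype.equivFin V) x : ℕ) with hord_def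
  have hord_inj : ∀ x y : V, ord x = ord y → x = y := by
    intro x y h
    exact (Fintype.equivFin V).injective (Fin.val_injective h)
  set a : V × V → ℝ := fun p => if sgn s(p.1, p.2) * (f p.1 * f p.2) < 0 then |f p.1|
      else if f p.2 ^ 2 < f p.1 ^ 2 ∨ (f p.1 ^ 2 = f p.2 ^ 2 ∧ ord p.1 < ord p.2)
        then |f p.1| - |f p.2| else 0 with ha_def
  set b : V × V → ℝ := fun p => if sgn s(p.1, p.2) * (f p.1 * f p.2) < 0 then |f p.1|
      else if f p.2 ^ 2 < f p.1 ^ 2 ∨ (f p.1 ^ 2 = f p.2 ^ 2 ∧ ord p.1 < ord p.2)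
        then |f p.1| + |f p.2| else 0 with hb_def
  -- the three per-pair bounds
  have habs : ∀ z w : ℝ, z ^ 2 ≤ w ^ 2 → |z| ≤ |w| := by
    intro z w h
    have := Real.sqrt_le_sqrt h
    rwa [Real.sqrt_sq_eq_abs, Real.sqrt_sq_eq_abs] at this
  have hC1 : ∀ p ∈ pairs G,
      max (f p.1 ^ 2 - f p.2 ^ 2) 0
        + (if sgn s(p.1, p.2) * (f p.1 * f p.2) < 0
            then min (f p.1 ^ 2) (f p.2 ^ 2) else 0) ≤ a p * b p := by
    rintro ⟨x, y⟩ -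
    simp only [ha_def, hb_def]
    by_cases hb : sgn s(x, y) * (f x * f y) < 0
    · rw [if_pos hb, if_pos hb, if_pos hb]
      rcases le_total (f y ^ 2) (f x ^ 2) with h | h
      · rw [max_eq_left (by linarith), min_eq_right h]
        nlinarith [sq_abs (f x)]
      · rw [max_eq_right (by linarith), min_eq_left h]
        nlinarith [sq_abs (f x)]
    · by_cases hc : f y ^ 2 < f x ^ 2 ∨ (f x ^ 2 = f y ^ 2 ∧ ord x < ord y)
      · rw [if_neg hb, if_neg hb, if_neg hb, if_pos hc, if_pos hc]
        have h : f y ^ 2 ≤ f x ^ 2 := by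
          rcases hc with h | ⟨h, -⟩
          · exact le_of_lt h
          · exact le_of_eq h.symm
        rw [max_eq_left (by linarith), add_zero]
        nlinarith [sq_abs (f x), sq_abs (f y)]
      · rw [if_neg hb, if_neg hb, if_neg hb, if_neg hc, if_neg hc]
        have h : f x ^ 2 ≤ f y ^ 2 := by
          rcases not_or.mp hc with ⟨h1, -⟩
          exact le_of_not_gt h1
        rw [max_eq_right (by linarith)]
        simp
  have hC2 : ∀ p ∈ pairs G,
      a p ^ 2 + a (p.2, p.1) ^ 2 ≤ (f p.1 - sgn s(p.1, p.2) * f p.2) ^ 2 := by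
    rintro ⟨x, y⟩ hp
    rw [mem_pairs] at hp
    have hs := hsgn s(x, y) (G.mem_edgeSet.mpr hp)
    simp only [ha_def]
    rw [show s(y, x) = s(x, y) from Sym2.eq_swap, mul_comm (f y) (f x)]
    by_cases hb : sgn s(x, y) * (f x * f y) < 0
    · rw [if_pos hb, if_pos hb]
      rcases hs with h | h <;> rw [h] at hb ⊢ <;>
        nlinarith [sq_abs (f x), sq_abs (f y)]
    · have hge : 0 ≤ sgn s(x, y) * (f x * f y) := not_lt.mp hb
      rw [if_neg hb, if_neg hb]
      by_cases hc : f y ^ 2 < f x ^ 2 ∨ (f x ^ 2 = f y ^ 2 ∧ ord x < ord y)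
      · have hc' : ¬ (f x ^ 2 < f y ^ 2 ∨ (f y ^ 2 = f x ^ 2 ∧ ord y < ord x)) := by
          rintro (h2 | ⟨h2, o2⟩) <;> rcases hc with h1 | ⟨h1, o1⟩ <;> first | linarith | omega
        rw [if_pos hc, if_neg hc']
        rcases hs with h | h <;> rw [h] at hge ⊢ <;>
          nlinarith [sq_abs (f x), sq_abs (f y), abs_mul (f x) (f y),
            le_abs_self (f x * f y), neg_abs_le (f x * f y)]
      · rw [if_neg hc]
        by_cases hc' : f x ^ 2 < f y ^ 2 ∨ (f y ^ 2 = f x ^ 2 ∧ ord y < ord x)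
        · rw [if_pos hc']
          rcases hs with h | h <;> rw [h] at hge ⊢ <;>
            nlinarith [sq_abs (f x), sq_abs (f y), abs_mul (f x) (f y),
              le_abs_self (f x * f y), neg_abs_le (f x * f y)]
        · rw [if_neg hc']
          nlinarith [sq_nonneg (f x - sgn s(x, y) * f y)]
  have hC3 : ∀ p ∈ pairs G,
      (a p ^ 2 + b p ^ 2) + (a (p.2, p.1) ^ 2 + b (p.2, p.1) ^ 2)
        ≤ 2 * (f p.1 ^ 2 + f p.2 ^ 2) := by
    rintro ⟨x, y⟩ hp
    simp only [ha_def, hb_def]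
    rw [show s(y, x) = s(x, y) from Sym2.eq_swap, mul_comm (f y) (f x)]
    by_cases hb : sgn s(x, y) * (f x * f y) < 0
    · rw [if_pos hb, if_pos hb, if_pos hb, if_pos hb]
      nlinarith [sq_abs (f x), sq_abs (f y)]
    · rw [if_neg hb, if_neg hb, if_neg hb, if_neg hb]
      by_cases hc : f y ^ 2 < f x ^ 2 ∨ (f x ^ 2 = f y ^ 2 ∧ ord x < ord y)
      · have hc' : ¬ (f x ^ 2 < f y ^ 2 ∨ (f y ^ 2 = f x ^ 2 ∧ ord y < ord x)) := by
          rintro (h2 | ⟨h2, o2⟩) <;> rcases hc with h1 | ⟨h1, o1⟩ <;> first | linarith | omega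
        rw [if_pos hc, if_pos hc, if_neg hc', if_neg hc']
        nlinarith [sq_abs (f x), sq_abs (f y)]
      · rw [if_neg hc, if_neg hc]
        by_cases hc' : f x ^ 2 < f y ^ 2 ∨ (f y ^ 2 = f x ^ 2 ∧ ord y < ord x)
        · rw [if_pos hc', if_pos hc']
          nlinarith [sq_abs (f x), sq_abs (f y)]
        · rw [if_neg hc', if_neg hc']
          nlinarith [sq_nonneg (f x), sq_nonneg (f y)]
  -- sums
  set Sa : ℝ := ∑ p ∈ pairs G, a p ^ 2 with hSa_def
  set Sb : ℝ := ∑ p ∈ pairs G, b p ^ 2 with hSb_def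
  have hSa_nn : 0 ≤ Sa := Finset.sum_nonneg fun p _ => sq_nonneg _
  have hSb_nn : 0 ≤ Sb := Finset.sum_nonneg fun p _ => sq_nonneg _
  have hSa_le : Sa ≤ mu1 * Nf := by
    have h2 : 2 * Sa = ∑ p ∈ pairs G, (a p ^ 2 + a (p.2, p.1) ^ 2) := by
      rw [Finset.sum_add_distrib, ← sum_pairs_swap G (fun p => a p ^ 2), hSa_def]
      ring
    have h3 := Finset.sum_le_sum hC2
    rw [← h2, hQ] at h3
    linarith
  have hD_le : ∑ x, (G.degree x : ℝ) * f x ^ 2 ≤ d * Nf := by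
    rw [hNf_def, Finset.mul_sum]
    refine Finset.sum_le_sum fun x _ => ?_
    refine mul_le_mul_of_nonneg_right ?_ (sq_nonneg _)
    rw [hd_def]
    exact_mod_cast G.degree_le_maxDegree x
  have hSab_le : Sa + Sb ≤ 2 * (d * Nf) := by
    have h2 : 2 * (Sa + Sb) = ∑ p ∈ pairs G,
        ((a p ^ 2 + b p ^ 2) + (a (p.2, p.1) ^ 2 + b (p.2, p.1) ^ 2)) := by
      rw [Finset.sum_add_distrib, Finset.sum_add_distrib, Finset.sum_add_distrib,
        ← sum_pairs_swap G (fun p => a p ^ 2), ← sum_pairs_swap G (fun p => b p ^ 2),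
        hSa_def, hSb_def]
      ring
    have h3 := Finset.sum_le_sum hC3
    rw [← h2] at h3
    have h4 : ∑ p ∈ pairs G, 2 * (f p.1 ^ 2 + f p.2 ^ 2)
        = 4 * ∑ x, (G.degree x : ℝ) * f x ^ 2 := by
      have : ∑ p ∈ pairs G, 2 * (f p.1 ^ 2 + f p.2 ^ 2)
          = 2 * ((∑ p ∈ pairs G, f p.1 ^ 2) + ∑ p ∈ pairs G, f p.2 ^ 2) := by
        rw [← Finset.sum_add_distrib, ← Finset.mul_sum]
      rw [this, sum_pairs_fst G (fun x => f x ^ 2), sum_pairs_snd G (fun x => f x ^ 2)]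
      ring
    rw [h4] at h3
    linarith
  -- Cauchy-Schwarz and the sweep bound
  have hCS := Finset.sum_mul_sq_le_sq_mul_sq (pairs G) a b
  have hsw := sweep_integrated G sgn hsgn f
  have hc_sum : psi G sgn * Nf ≤ ∑ p ∈ pairs G, a p * b p :=
    le_trans hsw (Finset.sum_le_sum hC1)
  have h6 : (psi G sgn * Nf) ^ 2 ≤ (∑ p ∈ pairs G, a p * b p) ^ 2 := by
    refine pow_le_pow_left₀ ?_ hc_sum 2
    positivity
  have h7 : (psi G sgn * Nf) ^ 2 ≤ mu1 * Nf * (2 * (d * Nf) - mu1 * Nf) := by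
    have e1 : 0 ≤ mu1 * Nf - Sa := by linarith
    have e2 : 0 ≤ 2 * (d * Nf) - mu1 * Nf - Sa := by nlinarith
    have e3 : Sa * Sb ≤ Sa * (2 * (d * Nf) - Sa) :=
      mul_le_mul_of_nonneg_left (by linarith) hSa_nn
    nlinarith [mul_nonneg e1 e2]
  have h8 : psi G sgn ^ 2 ≤ mu1 * (2 * d - mu1) := by
    have hN2 : 0 < Nf ^ 2 := by positivity
    have h7' : psi G sgn ^ 2 * Nf ^ 2 ≤ (mu1 * (2 * d - mu1)) * Nf ^ 2 := by nlinarith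
    exact le_of_mul_le_mul_right h7' hN2
  have h9 : (d - mu1) ^ 2 ≤ d ^ 2 - psi G sgn ^ 2 := by nlinarith
  have h10 : d - mu1 ≤ Real.sqrt (d ^ 2 - psi G sgn ^ 2) := by
    have h11 := Real.sqrt_le_sqrt h9
    rwa [Real.sqrt_sq (by linarith : (0:ℝ) ≤ d - mu1)] at h11
  linarith



end SignedPaper
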